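/- Let Γ be a consistent counter machine with m states, i* ∈ {1,…,m}, and R* the modified reflection matrix of dimension d = 5m+9. Define the strictly positive vector v ∈ ℝ^d by v_{A,1} = v_{A,2} = 1, v_{A,3} = v_{A,4} = v_{A,5} = 3, v_{B,j} = 2 for all j, v_{C,k} = 5 for k = 1,2, v_{D,k} = 2 for k = 1,2, v_{E,(i,b,c)} = 25 and v_{F,(i,b,c)} = 38 for all (i,b,c). Then for every nonempty subset I of the index set {1,…,d} and every i ∈ I, one has Σ_{j∈I} R*_{i,j} v_j > 0. -/

import Mathlib

open scoped BigOperators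

/-- A Skorokhod solution for the matrix `R` and input path `x`:
continuous `y, z` on `[0,∞)` with `z = x + R y`, `z ≥ 0`, `y 0 = 0`,
each `y j` nondecreasing, and `y j` does not increase while `z j > 0`
(the Lebesgue–Stieltjes measure of `y j` vanishes on `{s | z s j > 0}`). -/
def IsSkorokhodSolution {n : Type*} [Fintype n] (R : Matrix n n ℝ)
    (x y z : ℝ → n → ℝ) : Prop :=
  ContinuousOn y (Set.Ici 0) ∧
  ContinuousOn z (Set.Ici 0) ∧
  (∀ t : ℝ, 0 ≤ t → z t = x t + R.mulVec (y t)) ∧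
  (∀ t : ℝ, 0 ≤ t → ∀ j, 0 ≤ z t j) ∧
  (y 0 = 0) ∧
  (∀ j, MonotoneOn (fun t => y t j) (Set.Ici 0)) ∧
  (∀ j, ∀ s₁ s₂ : ℝ, 0 ≤ s₁ → s₁ ≤ s₂ →
      (∀ s ∈ Set.Ioo s₁ s₂, 0 < z s j) → y s₂ j = y s₁ j)

/-- `R` is an S-matrix: some nonnegative `w` with `R w > 0` componentwise. -/
def IsSMatrix {n : Type*} [Fintype n] (R : Matrix n n ℝ) : Prop :=
  ∃ w : n → ℝ, (∀ i, 0 ≤ w i) ∧ (∀ i, 0 < R.mulVec w i)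

/-- `R` is completely-S: every (nonempty) principal submatrix is an S-matrix. -/
def IsCompletelyS {n : Type*} [Fintype n] [DecidableEq n] (R : Matrix n n ℝ) : Prop :=
  ∀ I : Finset n, I.Nonempty →
    IsSMatrix (R.submatrix (fun a : I => (a : n)) (fun a : I => (a : n)))

/-- Stability of the fluid model `(z₀, θ, R)`: every Skorokhod solution for
`x t = z₀ + θ t` satisfies `z t → 0` as `t → ∞`. -/
def FluidStable {n : Type*} [Fintype n] (z0 θv : n → ℝ) (R : Matrix n n ℝ) : Prop :=
  ∀ y z : ℝ → n → ℝ,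
    IsSkorokhodSolution R (fun t i => z0 i + θv i * t) y z →
    Filter.Tendsto z Filter.atTop (nhds 0)

/-- `f` is active at rate `r` on `(s₁, s₂)`. -/
def ActiveAtRate (f : ℝ → ℝ) (r s₁ s₂ : ℝ) : Prop :=
  ∀ s ∈ Set.Ioo s₁ s₂, f s - f s₁ = r * (s - s₁)

/-- `f` is active at unit rate on `(s₁, s₂)`. -/
def UnitActive (f : ℝ → ℝ) (s₁ s₂ : ℝ) : Prop := ActiveAtRate f 1 s₁ s₂

/-- `f` is passive (constant) on `(s₁, s₂)`. -/
def Passive (f : ℝ → ℝ) (s₁ s₂ : ℝ) : Prop := ∀ s ∈ Set.Ioo s₁ s₂, f s = f s₁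

/-- A counter machine with `m` states: update map with moves in
`{(-1,0),(0,-1),(0,0),(1,0),(0,1)}`, never decrementing a zero counter. -/
structure CounterMachine (m : ℕ) where
  Γ : Fin m → Bool → Bool → Fin m × ℤ × ℤ
  moves : ∀ i b c, ((Γ i b c).2.1, (Γ i b c).2.2) ∈
      ({(-1,0), (0,-1), (0,0), (1,0), (0,1)} : Set (ℤ × ℤ))
  consistent : ∀ i b c, (b = false → 0 ≤ (Γ i b c).2.1) ∧ (c = false → 0 ≤ (Γ i b c).2.2)

/-- One step of the counter machine on a configuration. -/
def CounterMachine.step {m : ℕ} (M : CounterMachine m) :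
    Fin m × ℕ × ℕ → Fin m × ℕ × ℕ := fun cfg =>
  let r := M.Γ cfg.1 (decide (0 < cfg.2.1)) (decide (0 < cfg.2.2))
  (r.1, ((cfg.2.1 : ℤ) + r.2.1).toNat, ((cfg.2.2 : ℤ) + r.2.2).toNat)

/-- Index set of the associated Skorokhod problem: groups A (5), B (m), C (2),
D (2), E (4m), F (4m); total dimension 5m + 9. -/
inductive Idx (m : ℕ) where
  | A : Fin 5 → Idx m
  | B : Fin m → Idx m
  | C : Fin 2 → Idx m
  | D : Fin 2 → Idx m
  | E : Fin m → Bool → Bool → Idx m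
  | F : Fin m → Bool → Bool → Idx m
  deriving DecidableEq, Fintype

/-- Numeric value of a bit. -/
def bnum (b : Bool) : ℝ := if b then 1 else 0

/-- Real indicator of a decidable proposition. -/
def indC (P : Prop) [Decidable P] : ℝ := if P then 1 else 0

/-- The 5×5 block AA. -/
def AAmat : Matrix (Fin 5) (Fin 5) ℝ :=
  !![1,2,1,1,0; 0,1,2,1,1; 1,0,1,2,1; 1,1,0,1,2; 2,1,1,0,1]

/-- The reflection matrix `R` associated with the counter machine `M`. -/
def Rmat {m : ℕ} (M : CounterMachine m) : Matrix (Idx m) (Idx m) ℝ :=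
  fun p q => match p, q with
  | .A k, .A l => AAmat k l
  | .B _, .A l => if l = 0 then -1 else 0
  | .B j, .B j' => if j' = j then 1 else 0
  | .B j, .E i b c => if (M.Γ i b c).1 = j then 0 else 1
  | .C _, .A l => if l = 0 ∨ l = 3 then -1 else 0
  | .C k, .C k' => if k' = k then 1 else 0
  | .C k, .D k' => if k' = k then 1 else 0
  | .C k, .E i b c =>
      (if k = 0 then ((M.Γ i b c).2.1 : ℝ) else ((M.Γ i b c).2.2 : ℝ)) + 1
  | .D _, .A l => if l = 1 then -1 else 0
  | .D k, .C k' => if k' = k then 1 else 0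
  | .D k, .D k' => if k' = k then 1 else 0
  | .E _ b c, .A l => if l = 0 then -(bnum b) - bnum c else if l = 2 then -1 else 0
  | .E i _ _, .B j => if j = i then -1 else 0
  | .E _ b c, .C k => if k = 0 then 2 * bnum b - 1 else 2 * bnum c - 1
  | .E i b c, .E i' b' c' => if i' = i ∧ b' = b ∧ c' = c then 1 else 0
  | .E i b c, .F i' b' c' => if i' = i ∧ b' = b ∧ c' = c then 1 else 0
  | .F _ b c, .A l => if l = 0 then -(bnum b) - bnum c
      else if l = 2 then -1 else if l = 3 then -4 else if l = 4 then 4 else 0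
  | .F i _ _, .B j => if j = i then -1 else 0
  | .F _ b c, .C k => if k = 0 then 2 * bnum b - 1 else 2 * bnum c - 1
  | .F i b c, .E i' b' c' => if i' = i ∧ b' = b ∧ c' = c then 1 else 0
  | .F i b c, .F i' b' c' => if i' = i ∧ b' = b ∧ c' = c then 1 else 0
  | _, _ => 0

/-- The modified reflection matrix `R*` with halting state `i*`. -/
def RmatStar {m : ℕ} (M : CounterMachine m) (istar : Fin m) :
    Matrix (Idx m) (Idx m) ℝ :=
  fun p q => match p, q with
  | .A k, .B j => if j = istar ∧ (k = 2 ∨ k = 3 ∨ k = 4) then -1 else 0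
  | .E i b c, .B j =>
      if j = istar then -3 + bnum b + bnum c else if j = i then -1 else 0
  | .F i b c, .B j =>
      if j = istar then -4 + bnum b + bnum c else if j = i then -1 else 0
  | p, q => Rmat M p q

/-- The drift vector θ: −1 on the A-coordinates and 0 elsewhere. -/
def thetaVec (m : ℕ) : Idx m → ℝ := fun p => match p with
  | .A _ => -1
  | _ => 0

/-- The encoding `z^{i,C₁,C₂}` of a configuration as a state of the
Skorokhod problem. -/
def encCfg {m : ℕ} (i : Fin m) (C₁ C₂ : ℕ) : Idx m → ℝ := fun p => match p with
  | .A k => if k = 0 ∨ k = 4 then 0 else 1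
  | .B j => if j = i then 0 else 1
  | .C k => if k = 0 then (C₁ : ℝ) else (C₂ : ℝ)
  | .D _ => 0
  | .E _ _ _ => 3
  | .F _ _ _ => 4

/-- The linear input path `x t = z^{i,C₁,C₂} + θ t`. -/
def fluidX {m : ℕ} (i : Fin m) (C₁ C₂ : ℕ) : ℝ → Idx m → ℝ :=
  fun t p => encCfg i C₁ C₂ p + thetaVec m p * t

/-- The quantity Υ(i′,b,c) of the paper (for current configuration (i,C₁,C₂)). -/
def Upsilon {m : ℕ} (i : Fin m) (C₁ C₂ : ℕ) (i' : Fin m) (b c : Bool) : ℝ :=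
  -(bnum b) - bnum c + (2 * bnum b - 1) * indC (C₁ = 0)
    + (2 * bnum c - 1) * indC (C₂ = 0) - indC (i' = i)

/-- The witness vector `v` of Proposition 5.1. -/
def vvec (m : ℕ) : Idx m → ℝ := fun p => match p with
  | .A k => if k = 0 ∨ k = 1 then 1 else 3
  | .B _ => 2
  | .C _ => 5
  | .D _ => 2
  | .E _ _ _ => 25
  | .F _ _ _ => 38

section Aux

variable {m : ℕ}

/-- Equivalence between a sum of standard types and `Idx m`. -/
def idxEquiv (m : ℕ) :
    (Fin 5 ⊕ Fin m ⊕ Fin 2 ⊕ Fin 2 ⊕ (Fin m × Bool × Bool) ⊕ (Fin m × Bool × Bool)) ≃ Idx m where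
  toFun x := match x with
    | .inl k => .A k
    | .inr (.inl j) => .B j
    | .inr (.inr (.inl k)) => .C k
    | .inr (.inr (.inr (.inl k))) => .D k
    | .inr (.inr (.inr (.inr (.inl (i, b, c))))) => .E i b c
    | .inr (.inr (.inr (.inr (.inr (i, b, c))))) => .F i b c
  invFun p := match p with
    | .A k => .inl k
    | .B j => .inr (.inl j)
    | .C k => .inr (.inr (.inl k))
    | .D k => .inr (.inr (.inr (.inl k)))
    | .E i b c => .inr (.inr (.inr (.inr (.inl (i, b, c)))))
    | .F i b c => .inr (.inr (.inr (.inr (.inr (i, b, c)))))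
  left_inv x := by rcases x with k | j | k | k | ⟨i, b, c⟩ | ⟨i, b, c⟩ <;> rfl
  right_inv p := by cases p <;> rfl

lemma sum_Idx (f : Idx m → ℝ) :
    ∑ p, f p = (∑ k : Fin 5, f (.A k)) + (∑ j : Fin m, f (.B j))
      + (∑ k : Fin 2, f (.C k)) + (∑ k : Fin 2, f (.D k))
      + (∑ x : Fin m × Bool × Bool, f (.E x.1 x.2.1 x.2.2))
      + (∑ x : Fin m × Bool × Bool, f (.F x.1 x.2.1 x.2.2)) := by
  rw [← Equiv.sum_comp (idxEquiv m) f]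
  rw [Fintype.sum_sum_type, Fintype.sum_sum_type, Fintype.sum_sum_type,
    Fintype.sum_sum_type, Fintype.sum_sum_type]
  simp only [idxEquiv, Equiv.coe_fn_mk]
  ring

lemma sum_pair_lb {α : Type*} [Fintype α] [DecidableEq α] (f : α → ℝ) (a b : α)
    (h0 : ∀ j, j ≠ a → j ≠ b → f j = 0) (ca cb : ℝ)
    (hca : ca ≤ f a) (hcb : a ≠ b → cb ≤ f b) (hca0 : ca ≤ 0) (hcb0 : cb ≤ 0) :
    ca + cb ≤ ∑ j, f j := by
  have hsub : ∑ j, f j = ∑ j ∈ ({a, b} : Finset α), f j := by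
    refine (Finset.sum_subset (Finset.subset_univ _) ?_).symm
    intro j _ hj
    simp only [Finset.mem_insert, Finset.mem_singleton, not_or] at hj
    exact h0 j hj.1 hj.2
  rw [hsub]
  by_cases hab : a = b
  · subst hab
    rw [Finset.insert_eq_self.2 (Finset.mem_singleton_self _), Finset.sum_singleton]
    linarith
  · rw [Finset.sum_pair hab]
    have := hcb hab
    linarith

lemma key_reduce {n : Type*} [Fintype n] [DecidableEq n] (R : Matrix n n ℝ) (v : n → ℝ)
    (h : ∀ i, 0 < R i i * v i + ∑ j, min (R i j * v j) 0) :
    ∀ I : Finset n, ∀ i ∈ I, 0 < ∑ j ∈ I, R i j * v j := by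
  intro I i hi
  have h1 : R i i * v i + ∑ j ∈ I.erase i, R i j * v j = ∑ j ∈ I, R i j * v j :=
    Finset.add_sum_erase I (fun j => R i j * v j) hi
  have h2 : ∑ j ∈ I.erase i, min (R i j * v j) 0 ≤ ∑ j ∈ I.erase i, R i j * v j :=
    Finset.sum_le_sum (fun j _ => min_le_left _ _)
  have h3 : ∑ j, min (R i j * v j) 0 ≤ ∑ j ∈ I.erase i, min (R i j * v j) 0 := by
    have hneg : ∀ j ∈ Finset.univ, j ∉ I.erase i → (0:ℝ) ≤ -(min (R i j * v j) 0) := by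
      intro j _ _
      simp only [neg_nonneg]
      exact min_le_right _ _
    have := Finset.sum_le_sum_of_subset_of_nonneg (Finset.subset_univ (I.erase i)) hneg
    simp only [Finset.sum_neg_distrib] at this
    linarith
  have := h i
  linarith

end Aux
section RowBound

variable {m : ℕ}

lemma min_lb {x c : ℝ} (h : c ≤ x) (h0 : c ≤ 0) : c ≤ min x 0 := le_min h h0

set_option maxHeartbeats 4000000 in
lemma row_bound (M : CounterMachine m) (istar : Fin m) (p : Idx m) :
    0 < RmatStar M istar p p * vvec m p
      + ∑ j, min (RmatStar M istar p j * vvec m j) 0 := by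
  rw [sum_Idx (fun j => min (RmatStar M istar p j * vvec m j) 0)]
  cases p with
  | A k =>
      have hA : (∑ l : Fin 5, min (RmatStar M istar (Idx.A k) (Idx.A l) * vvec m (Idx.A l)) 0)
          = 0 := Finset.sum_eq_zero fun l _ => by
        apply min_eq_right
        apply mul_nonneg
        · show 0 ≤ AAmat k l
          fin_cases k <;> fin_cases l <;> norm_num [AAmat]
        · show (0:ℝ) ≤ if l = 0 ∨ l = 1 then 1 else 3
          split <;> norm_num
      have hC : (∑ l : Fin 2, min (RmatStar M istar (Idx.A k) (Idx.C l) * vvec m (Idx.C l)) 0)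
          = 0 := Finset.sum_eq_zero fun l _ => by
        show min ((0:ℝ) * 5) 0 = 0; norm_num
      have hD : (∑ l : Fin 2, min (RmatStar M istar (Idx.A k) (Idx.D l) * vvec m (Idx.D l)) 0)
          = 0 := Finset.sum_eq_zero fun l _ => by
        show min ((0:ℝ) * 2) 0 = 0; norm_num
      have hE : (∑ x : Fin m × Bool × Bool,
          min (RmatStar M istar (Idx.A k) (Idx.E x.1 x.2.1 x.2.2) * vvec m (Idx.E x.1 x.2.1 x.2.2)) 0) = 0 :=
        Finset.sum_eq_zero fun x _ => by
          show min ((0:ℝ) * 25) 0 = 0; norm_num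
      have hF : (∑ x : Fin m × Bool × Bool,
          min (RmatStar M istar (Idx.A k) (Idx.F x.1 x.2.1 x.2.2) * vvec m (Idx.F x.1 x.2.1 x.2.2)) 0) = 0 :=
        Finset.sum_eq_zero fun x _ => by
          show min ((0:ℝ) * 38) 0 = 0; norm_num
      by_cases hk : k = 2 ∨ k = 3 ∨ k = 4
      · have hB : (∑ j : Fin m,
            min (RmatStar M istar (Idx.A k) (Idx.B j) * vvec m (Idx.B j)) 0) = -2 := by
          rw [Fintype.sum_eq_single istar (fun j hj => by
            show min ((if j = istar ∧ (k = 2 ∨ k = 3 ∨ k = 4) then (-1:ℝ) else 0) * 2) 0 = 0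
            rw [if_neg (fun hcon => hj hcon.1)]; norm_num)]
          show min ((if istar = istar ∧ (k = 2 ∨ k = 3 ∨ k = 4) then (-1:ℝ) else 0) * 2) 0 = -2
          rw [if_pos ⟨rfl, hk⟩]
          norm_num [min_def]
        have hdiag : RmatStar M istar (Idx.A k) (Idx.A k) * vvec m (Idx.A k) = 3 := by
          show AAmat k k * (if k = 0 ∨ k = 1 then (1:ℝ) else 3) = 3
          rcases hk with rfl | rfl | rfl <;> simp [AAmat]
        rw [hA, hB, hC, hD, hE, hF, hdiag]; norm_num
      · have hB : (∑ j : Fin m,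
            min (RmatStar M istar (Idx.A k) (Idx.B j) * vvec m (Idx.B j)) 0) = 0 :=
          Finset.sum_eq_zero fun j _ => by
            show min ((if j = istar ∧ (k = 2 ∨ k = 3 ∨ k = 4) then (-1:ℝ) else 0) * 2) 0 = 0
            rw [if_neg (fun hcon => hk hcon.2)]; norm_num
        have hdiag : RmatStar M istar (Idx.A k) (Idx.A k) * vvec m (Idx.A k) = 1 := by
          show AAmat k k * (if k = 0 ∨ k = 1 then (1:ℝ) else 3) = 1
          fin_cases k <;> simp_all <;> norm_num [AAmat]
        rw [hA, hB, hC, hD, hE, hF, hdiag]; norm_num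
  | B j =>
      have hA : (∑ l : Fin 5, min (RmatStar M istar (Idx.B j) (Idx.A l) * vvec m (Idx.A l)) 0)
          = -1 := by
        rw [Fin.sum_univ_five]
        show min ((-1:ℝ) * 1) 0 + min ((0:ℝ) * 1) 0 + min ((0:ℝ) * 3) 0
          + min ((0:ℝ) * 3) 0 + min ((0:ℝ) * 3) 0 = -1
        norm_num [min_def]
      have hB : (∑ j' : Fin m, min (RmatStar M istar (Idx.B j) (Idx.B j') * vvec m (Idx.B j')) 0)
          = 0 := Finset.sum_eq_zero fun x _ => by
        show min ((if x = j then (1:ℝ) else 0) * 2) 0 = 0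
        apply min_eq_right; split <;> norm_num
      have hC : (∑ k : Fin 2, min (RmatStar M istar (Idx.B j) (Idx.C k) * vvec m (Idx.C k)) 0)
          = 0 := Finset.sum_eq_zero fun k _ => by
        show min ((0:ℝ) * 5) 0 = 0; norm_num
      have hD : (∑ k : Fin 2, min (RmatStar M istar (Idx.B j) (Idx.D k) * vvec m (Idx.D k)) 0)
          = 0 := Finset.sum_eq_zero fun k _ => by
        show min ((0:ℝ) * 2) 0 = 0; norm_num
      have hE : (∑ x : Fin m × Bool × Bool,
          min (RmatStar M istar (Idx.B j) (Idx.E x.1 x.2.1 x.2.2) * vvec m (Idx.E x.1 x.2.1 x.2.2)) 0) = 0 :=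
        Finset.sum_eq_zero fun x _ => by
          show min ((if (M.Γ x.1 x.2.1 x.2.2).1 = j then (0:ℝ) else 1) * 25) 0 = 0
          apply min_eq_right; split <;> norm_num
      have hF : (∑ x : Fin m × Bool × Bool,
          min (RmatStar M istar (Idx.B j) (Idx.F x.1 x.2.1 x.2.2) * vvec m (Idx.F x.1 x.2.1 x.2.2)) 0) = 0 :=
        Finset.sum_eq_zero fun x _ => by
          show min ((0:ℝ) * 38) 0 = 0; norm_num
      rw [hA, hB, hC, hD, hE, hF]
      show (0:ℝ) < (if j = j then (1:ℝ) else 0) * 2 + (-1 + 0 + 0 + 0 + 0 + 0)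
      rw [if_pos rfl]; norm_num
  | C k =>
      have hA : (∑ l : Fin 5, min (RmatStar M istar (Idx.C k) (Idx.A l) * vvec m (Idx.A l)) 0)
          = -4 := by
        rw [Fin.sum_univ_five]
        show min ((-1:ℝ) * 1) 0 + min ((0:ℝ) * 1) 0 + min ((0:ℝ) * 3) 0
          + min ((-1:ℝ) * 3) 0 + min ((0:ℝ) * 3) 0 = -4
        norm_num [min_def]
      have hB : (∑ j : Fin m, min (RmatStar M istar (Idx.C k) (Idx.B j) * vvec m (Idx.B j)) 0)
          = 0 := Finset.sum_eq_zero fun j _ => by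
        show min ((0:ℝ) * 2) 0 = 0; norm_num
      have hC : (∑ l : Fin 2, min (RmatStar M istar (Idx.C k) (Idx.C l) * vvec m (Idx.C l)) 0)
          = 0 := Finset.sum_eq_zero fun l _ => by
        show min ((if l = k then (1:ℝ) else 0) * 5) 0 = 0
        apply min_eq_right; split <;> norm_num
      have hD : (∑ l : Fin 2, min (RmatStar M istar (Idx.C k) (Idx.D l) * vvec m (Idx.D l)) 0)
          = 0 := Finset.sum_eq_zero fun l _ => by
        show min ((if l = k then (1:ℝ) else 0) * 2) 0 = 0
        apply min_eq_right; split <;> norm_num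
      have hE : (∑ x : Fin m × Bool × Bool,
          min (RmatStar M istar (Idx.C k) (Idx.E x.1 x.2.1 x.2.2) * vvec m (Idx.E x.1 x.2.1 x.2.2)) 0) = 0 := by
        apply Finset.sum_eq_zero
        rintro ⟨i', b, c⟩ _
        have hm := M.moves i' b c
        simp only [Set.mem_insert_iff, Set.mem_singleton_iff, Prod.mk.injEq] at hm
        show min (((if k = 0 then ((M.Γ i' b c).2.1 : ℝ) else ((M.Γ i' b c).2.2 : ℝ)) + 1) * 25) 0 = 0
        apply min_eq_right
        rcases hm with ⟨h1, h2⟩ | ⟨h1, h2⟩ | ⟨h1, h2⟩ | ⟨h1, h2⟩ | ⟨h1, h2⟩ <;>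
          rw [h1, h2] <;> split <;> norm_num
      have hF : (∑ x : Fin m × Bool × Bool,
          min (RmatStar M istar (Idx.C k) (Idx.F x.1 x.2.1 x.2.2) * vvec m (Idx.F x.1 x.2.1 x.2.2)) 0) = 0 :=
        Finset.sum_eq_zero fun x _ => by
          show min ((0:ℝ) * 38) 0 = 0; norm_num
      rw [hA, hB, hC, hD, hE, hF]
      show (0:ℝ) < (if k = k then (1:ℝ) else 0) * 5 + (-4 + 0 + 0 + 0 + 0 + 0)
      rw [if_pos rfl]; norm_num
  | D k =>
      have hA : (∑ l : Fin 5, min (RmatStar M istar (Idx.D k) (Idx.A l) * vvec m (Idx.A l)) 0)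
          = -1 := by
        rw [Fin.sum_univ_five]
        show min ((0:ℝ) * 1) 0 + min ((-1:ℝ) * 1) 0 + min ((0:ℝ) * 3) 0
          + min ((0:ℝ) * 3) 0 + min ((0:ℝ) * 3) 0 = -1
        norm_num [min_def]
      have hB : (∑ j : Fin m, min (RmatStar M istar (Idx.D k) (Idx.B j) * vvec m (Idx.B j)) 0)
          = 0 := Finset.sum_eq_zero fun j _ => by
        show min ((0:ℝ) * 2) 0 = 0; norm_num
      have hC : (∑ l : Fin 2, min (RmatStar M istar (Idx.D k) (Idx.C l) * vvec m (Idx.C l)) 0)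
          = 0 := Finset.sum_eq_zero fun l _ => by
        show min ((if l = k then (1:ℝ) else 0) * 5) 0 = 0
        apply min_eq_right; split <;> norm_num
      have hD : (∑ l : Fin 2, min (RmatStar M istar (Idx.D k) (Idx.D l) * vvec m (Idx.D l)) 0)
          = 0 := Finset.sum_eq_zero fun l _ => by
        show min ((if l = k then (1:ℝ) else 0) * 2) 0 = 0
        apply min_eq_right; split <;> norm_num
      have hE : (∑ x : Fin m × Bool × Bool,
          min (RmatStar M istar (Idx.D k) (Idx.E x.1 x.2.1 x.2.2) * vvec m (Idx.E x.1 x.2.1 x.2.2)) 0) = 0 :=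
        Finset.sum_eq_zero fun x _ => by
          show min ((0:ℝ) * 25) 0 = 0; norm_num
      have hF : (∑ x : Fin m × Bool × Bool,
          min (RmatStar M istar (Idx.D k) (Idx.F x.1 x.2.1 x.2.2) * vvec m (Idx.F x.1 x.2.1 x.2.2)) 0) = 0 :=
        Finset.sum_eq_zero fun x _ => by
          show min ((0:ℝ) * 38) 0 = 0; norm_num
      rw [hA, hB, hC, hD, hE, hF]
      show (0:ℝ) < (if k = k then (1:ℝ) else 0) * 2 + (-1 + 0 + 0 + 0 + 0 + 0)
      rw [if_pos rfl]; norm_num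
  | E i b c =>
      have hb : 0 ≤ bnum b ∧ bnum b ≤ 1 := by cases b <;> norm_num [bnum]
      have hc : 0 ≤ bnum c ∧ bnum c ≤ 1 := by cases c <;> norm_num [bnum]
      have hA : (-5:ℝ) ≤ ∑ l : Fin 5,
          min (RmatStar M istar (Idx.E i b c) (Idx.A l) * vvec m (Idx.A l)) 0 := by
        rw [Fin.sum_univ_five]
        have t0 : (-2:ℝ) ≤ min (RmatStar M istar (Idx.E i b c) (Idx.A 0) * vvec m (Idx.A 0)) 0 := by
          apply min_lb _ (by norm_num)
          show (-2:ℝ) ≤ (-(bnum b) - bnum c) * 1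
          nlinarith [hb.1, hb.2, hc.1, hc.2]
        have t1 : min (RmatStar M istar (Idx.E i b c) (Idx.A 1) * vvec m (Idx.A 1)) 0 = 0 := by
          show min ((0:ℝ) * 1) 0 = 0; norm_num
        have t2 : (-3:ℝ) ≤ min (RmatStar M istar (Idx.E i b c) (Idx.A 2) * vvec m (Idx.A 2)) 0 := by
          apply min_lb _ (by norm_num)
          show (-3:ℝ) ≤ (-1:ℝ) * 3; norm_num
        have t3 : min (RmatStar M istar (Idx.E i b c) (Idx.A 3) * vvec m (Idx.A 3)) 0 = 0 := by
          show min ((0:ℝ) * 3) 0 = 0; norm_num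
        have t4 : min (RmatStar M istar (Idx.E i b c) (Idx.A 4) * vvec m (Idx.A 4)) 0 = 0 := by
          show min ((0:ℝ) * 3) 0 = 0; norm_num
        rw [t1, t3, t4]; linarith
      have hB : (-6:ℝ) + (-2) ≤ ∑ j' : Fin m,
          min (RmatStar M istar (Idx.E i b c) (Idx.B j') * vvec m (Idx.B j')) 0 := by
        refine sum_pair_lb _ istar i ?_ _ _ ?_ ?_ (by norm_num) (by norm_num)
        · intro j h1 h2
          show min ((if j = istar then (-3:ℝ) + bnum b + bnum c
              else if j = i then -1 else 0) * 2) 0 = 0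
          rw [if_neg h1, if_neg h2]; norm_num
        · show (-6:ℝ) ≤ min ((if istar = istar then (-3:ℝ) + bnum b + bnum c
              else if istar = i then -1 else 0) * 2) 0
          rw [if_pos rfl]
          apply min_lb _ (by norm_num)
          nlinarith [hb.1, hb.2, hc.1, hc.2]
        · intro hne
          show (-2:ℝ) ≤ min ((if i = istar then (-3:ℝ) + bnum b + bnum c
              else if i = i then -1 else 0) * 2) 0
          rw [if_neg (Ne.symm hne), if_pos rfl]
          apply min_lb _ (by norm_num); norm_num
      have hC : (-10:ℝ) ≤ ∑ l : Fin 2,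
          min (RmatStar M istar (Idx.E i b c) (Idx.C l) * vvec m (Idx.C l)) 0 := by
        rw [Fin.sum_univ_two]
        have t0 : (-5:ℝ) ≤ min (RmatStar M istar (Idx.E i b c) (Idx.C 0) * vvec m (Idx.C 0)) 0 := by
          apply min_lb _ (by norm_num)
          show (-5:ℝ) ≤ (2 * bnum b - 1) * 5
          nlinarith [hb.1, hb.2]
        have t1 : (-5:ℝ) ≤ min (RmatStar M istar (Idx.E i b c) (Idx.C 1) * vvec m (Idx.C 1)) 0 := by
          apply min_lb _ (by norm_num)
          show (-5:ℝ) ≤ (2 * bnum c - 1) * 5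
          nlinarith [hc.1, hc.2]
        linarith
      have hD : (∑ l : Fin 2,
          min (RmatStar M istar (Idx.E i b c) (Idx.D l) * vvec m (Idx.D l)) 0) = 0 :=
        Finset.sum_eq_zero fun l _ => by
          show min ((0:ℝ) * 2) 0 = 0; norm_num
      have hE : (∑ x : Fin m × Bool × Bool,
          min (RmatStar M istar (Idx.E i b c) (Idx.E x.1 x.2.1 x.2.2) * vvec m (Idx.E x.1 x.2.1 x.2.2)) 0) = 0 :=
        Finset.sum_eq_zero fun x _ => by
          show min ((if x.1 = i ∧ x.2.1 = b ∧ x.2.2 = c then (1:ℝ) else 0) * 25) 0 = 0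
          apply min_eq_right; split <;> norm_num
      have hF : (∑ x : Fin m × Bool × Bool,
          min (RmatStar M istar (Idx.E i b c) (Idx.F x.1 x.2.1 x.2.2) * vvec m (Idx.F x.1 x.2.1 x.2.2)) 0) = 0 :=
        Finset.sum_eq_zero fun x _ => by
          show min ((if x.1 = i ∧ x.2.1 = b ∧ x.2.2 = c then (1:ℝ) else 0) * 38) 0 = 0
          apply min_eq_right; split <;> norm_num
      have hdiag : RmatStar M istar (Idx.E i b c) (Idx.E i b c) * vvec m (Idx.E i b c) = 25 := by
        show (if i = i ∧ b = b ∧ c = c then (1:ℝ) else 0) * 25 = 25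
        rw [if_pos ⟨rfl, rfl, rfl⟩]; norm_num
      rw [hD, hE, hF, hdiag]; linarith
  | F i b c =>
      have hb : 0 ≤ bnum b ∧ bnum b ≤ 1 := by cases b <;> norm_num [bnum]
      have hc : 0 ≤ bnum c ∧ bnum c ≤ 1 := by cases c <;> norm_num [bnum]
      have hA : (-17:ℝ) ≤ ∑ l : Fin 5,
          min (RmatStar M istar (Idx.F i b c) (Idx.A l) * vvec m (Idx.A l)) 0 := by
        rw [Fin.sum_univ_five]
        have t0 : (-2:ℝ) ≤ min (RmatStar M istar (Idx.F i b c) (Idx.A 0) * vvec m (Idx.A 0)) 0 := by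
          apply min_lb _ (by norm_num)
          show (-2:ℝ) ≤ (-(bnum b) - bnum c) * 1
          nlinarith [hb.1, hb.2, hc.1, hc.2]
        have t1 : min (RmatStar M istar (Idx.F i b c) (Idx.A 1) * vvec m (Idx.A 1)) 0 = 0 := by
          show min ((0:ℝ) * 1) 0 = 0; norm_num
        have t2 : (-3:ℝ) ≤ min (RmatStar M istar (Idx.F i b c) (Idx.A 2) * vvec m (Idx.A 2)) 0 := by
          apply min_lb _ (by norm_num)
          show (-3:ℝ) ≤ (-1:ℝ) * 3; norm_num
        have t3 : (-12:ℝ) ≤ min (RmatStar M istar (Idx.F i b c) (Idx.A 3) * vvec m (Idx.A 3)) 0 := by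
          apply min_lb _ (by norm_num)
          show (-12:ℝ) ≤ (-4:ℝ) * 3; norm_num
        have t4 : min (RmatStar M istar (Idx.F i b c) (Idx.A 4) * vvec m (Idx.A 4)) 0 = 0 := by
          show min ((4:ℝ) * 3) 0 = 0
          apply min_eq_right; norm_num
        rw [t1, t4]; linarith
      have hB : (-8:ℝ) + (-2) ≤ ∑ j' : Fin m,
          min (RmatStar M istar (Idx.F i b c) (Idx.B j') * vvec m (Idx.B j')) 0 := by
        refine sum_pair_lb _ istar i ?_ _ _ ?_ ?_ (by norm_num) (by norm_num)
        · intro j h1 h2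
          show min ((if j = istar then (-4:ℝ) + bnum b + bnum c
              else if j = i then -1 else 0) * 2) 0 = 0
          rw [if_neg h1, if_neg h2]; norm_num
        · show (-8:ℝ) ≤ min ((if istar = istar then (-4:ℝ) + bnum b + bnum c
              else if istar = i then -1 else 0) * 2) 0
          rw [if_pos rfl]
          apply min_lb _ (by norm_num)
          nlinarith [hb.1, hb.2, hc.1, hc.2]
        · intro hne
          show (-2:ℝ) ≤ min ((if i = istar then (-4:ℝ) + bnum b + bnum c
              else if i = i then -1 else 0) * 2) 0
          rw [if_neg (Ne.symm hne), if_pos rfl]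
          apply min_lb _ (by norm_num); norm_num
      have hC : (-10:ℝ) ≤ ∑ l : Fin 2,
          min (RmatStar M istar (Idx.F i b c) (Idx.C l) * vvec m (Idx.C l)) 0 := by
        rw [Fin.sum_univ_two]
        have t0 : (-5:ℝ) ≤ min (RmatStar M istar (Idx.F i b c) (Idx.C 0) * vvec m (Idx.C 0)) 0 := by
          apply min_lb _ (by norm_num)
          show (-5:ℝ) ≤ (2 * bnum b - 1) * 5
          nlinarith [hb.1, hb.2]
        have t1 : (-5:ℝ) ≤ min (RmatStar M istar (Idx.F i b c) (Idx.C 1) * vvec m (Idx.C 1)) 0 := by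
          apply min_lb _ (by norm_num)
          show (-5:ℝ) ≤ (2 * bnum c - 1) * 5
          nlinarith [hc.1, hc.2]
        linarith
      have hD : (∑ l : Fin 2,
          min (RmatStar M istar (Idx.F i b c) (Idx.D l) * vvec m (Idx.D l)) 0) = 0 :=
        Finset.sum_eq_zero fun l _ => by
          show min ((0:ℝ) * 2) 0 = 0; norm_num
      have hE : (∑ x : Fin m × Bool × Bool,
          min (RmatStar M istar (Idx.F i b c) (Idx.E x.1 x.2.1 x.2.2) * vvec m (Idx.E x.1 x.2.1 x.2.2)) 0) = 0 :=
        Finset.sum_eq_zero fun x _ => by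
          show min ((if x.1 = i ∧ x.2.1 = b ∧ x.2.2 = c then (1:ℝ) else 0) * 25) 0 = 0
          apply min_eq_right; split <;> norm_num
      have hF : (∑ x : Fin m × Bool × Bool,
          min (RmatStar M istar (Idx.F i b c) (Idx.F x.1 x.2.1 x.2.2) * vvec m (Idx.F x.1 x.2.1 x.2.2)) 0) = 0 :=
        Finset.sum_eq_zero fun x _ => by
          show min ((if x.1 = i ∧ x.2.1 = b ∧ x.2.2 = c then (1:ℝ) else 0) * 38) 0 = 0
          apply min_eq_right; split <;> norm_num
      have hdiag : RmatStar M istar (Idx.F i b c) (Idx.F i b c) * vvec m (Idx.F i b c) = 38 := by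
        show (if i = i ∧ b = b ∧ c = c then (1:ℝ) else 0) * 38 = 38
        rw [if_pos ⟨rfl, rfl, rfl⟩]; norm_num
      rw [hD, hE, hF, hdiag]; linarith

end RowBound
/-- The single strictly positive vector `v` witnesses the
S-matrix property of every principal submatrix of the modified matrix `R*`:
for every nonempty index set `I` and every `i ∈ I`,
`∑_{j ∈ I} R*_{i,j} v_j > 0`. -/
theorem vvec_witnesses_completelyS {m : ℕ} (M : CounterMachine m)
    (istar : Fin m) :
    (∀ p : Idx m, 0 < vvec m p) ∧
    ∀ I : Finset (Idx m), I.Nonempty → ∀ i ∈ I,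
      0 < ∑ j ∈ I, RmatStar M istar i j * vvec m j := by
  constructor
  · intro p
    cases p with
    | A k => show (0:ℝ) < if k = 0 ∨ k = 1 then 1 else 3; split <;> norm_num
    | B j => show (0:ℝ) < 2; norm_num
    | C k => show (0:ℝ) < 5; norm_num
    | D k => show (0:ℝ) < 2; norm_num
    | E i b c => show (0:ℝ) < 25; norm_num
    | F i b c => show (0:ℝ) < 38; norm_num
  · intro I _ i hi
    exact key_reduce (RmatStar M istar) (vvec m) (row_bound M istar) I i hi
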